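/- Suppose S = {a, b, c} is a locally maximal product-free set of size 3 in a finite group G such that every 2-element subset of S generates ⟨S⟩, c is an involution, and a, b are not involutions. Then either |G| ≤ 24, or both a and b have order 3. -/

import Mathlib

open scoped Pointwise

def productFree {G : Type*} [Group G] (S : Set G) : Prop :=
  ∀ a ∈ S, ∀ b ∈ S, a * b ∉ S

def locallyMaximalPF {G : Type*} [Group G] (S : Set G) : Prop :=
  productFree S ∧ ∀ T : Set G, productFree T → S ⊆ T → T = S

namespace AH

variable {G : Type*} [Group G]

lemma divTri2 {nn d : ℤ} (hn : 0 < nn) (h : nn ∣ d) :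
    d = 0 ∨ d = nn ∨ d = -nn ∨ 2 * nn ≤ d ∨ d ≤ -(2 * nn) := by
  obtain ⟨k, rfl⟩ := h
  rcases lt_trichotomy k 0 with hk | rfl | hk
  · rcases eq_or_lt_of_le (show k ≤ -1 by omega) with rfl | hk2
    · right; right; left; ring
    · right; right; right; right
      have : nn * k ≤ nn * (-2) := by
        apply mul_le_mul_of_nonneg_left (by omega) (by omega)
      omega
  · left; ring
  · rcases eq_or_lt_of_le (show 1 ≤ k by omega) with rfl | hk2
    · right; left; ring
    · right; right; right; left
      have : nn * 2 ≤ nn * k := by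
        apply mul_le_mul_of_nonneg_left (by omega) (by omega)
      omega

lemma dvd_of_zpow_eq {g : G} {p q : ℤ} (h : g ^ p = g ^ q) : (orderOf g : ℤ) ∣ p - q :=
  orderOf_dvd_sub_iff_zpow_eq_zpow.mpr h

lemma zpow_eq_of_dvd {g : G} {p q : ℤ} (h : (orderOf g : ℤ) ∣ p - q) : g ^ p = g ^ q :=
  orderOf_dvd_sub_iff_zpow_eq_zpow.mp h

lemma one_not_mem {S : Set G} (hpf : productFree S) {c : G} (hcS : c ∈ S) (hc2 : c * c = 1) :
    (1 : G) ∉ S := fun h1 => hpf c hcS c hcS (hc2 ▸ h1)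

lemma covering {S : Set G} (h : locallyMaximalPF S) (h1 : (1 : G) ∉ S) (g : G) :
    g ∈ S ∨ g = 1 ∨ (∃ s ∈ S, ∃ t ∈ S, s * t = g) ∨ (∃ s ∈ S, ∃ t ∈ S, g * s = t) ∨
      (∃ s ∈ S, ∃ t ∈ S, s * g = t) ∨ g * g ∈ S := by
  by_contra hcon
  push_neg at hcon
  obtain ⟨hgS, hg1, h3, h4, h5, h6⟩ := hcon
  have hTpf : productFree (insert g S) := by
    intro u hu v hv huv
    rcases Set.mem_insert_iff.1 hu with hu1 | hu2
    · subst hu1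
      rcases Set.mem_insert_iff.1 hv with hv1 | hv2
      · subst hv1
        rcases Set.mem_insert_iff.1 huv with he | he
        · exact hg1 (mul_eq_left.mp he)
        · exact h6 he
      · rcases Set.mem_insert_iff.1 huv with he | he
        · exact h1 ((mul_eq_left.mp he) ▸ hv2)
        · exact h4 v hv2 _ he rfl
    · rcases Set.mem_insert_iff.1 hv with hv1 | hv2
      · subst hv1
        rcases Set.mem_insert_iff.1 huv with he | he
        · exact h1 ((mul_eq_right.mp he) ▸ hu2)
        · exact h5 u hu2 _ he rfl
      · rcases Set.mem_insert_iff.1 huv with he | he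
        · exact h3 u hu2 v hv2 he
        · exact h.1 u hu2 v hv2 he
  have := h.2 (insert g S) hTpf (Set.subset_insert _ _)
  exact hgS (this ▸ Set.mem_insert g S)

lemma sq_mem {S : Set G} (H : Subgroup G)
    (hcov : ∀ z : G, z ∈ S ∨ z = 1 ∨ (∃ s ∈ S, ∃ t ∈ S, s * t = z) ∨
      (∃ s ∈ S, ∃ t ∈ S, z * s = t) ∨ (∃ s ∈ S, ∃ t ∈ S, s * z = t) ∨ z * z ∈ S)
    (hSH : ∀ s ∈ S, s ∈ H) {x : G} (hx : x ∉ H) : x * x ∈ S := by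
  rcases hcov x with hh | hh | ⟨s, hs, t, ht, hh⟩ | ⟨s, hs, t, ht, hh⟩ | ⟨s, hs, t, ht, hh⟩ | hh
  · exact absurd (hSH _ hh) hx
  · exact absurd (hh ▸ H.one_mem) hx
  · exact absurd (hh ▸ H.mul_mem (hSH _ hs) (hSH _ ht)) hx
  · have : x = t * s⁻¹ := by rw [← hh]; group
    exact absurd (this ▸ H.mul_mem (hSH _ ht) (H.inv_mem (hSH _ hs))) hx
  · have : x = s⁻¹ * t := by rw [← hh]; group
    exact absurd (this ▸ H.mul_mem (H.inv_mem (hSH _ hs)) (hSH _ ht)) hx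
  · exact hh

lemma half_exists [Fintype G] {g c : G} (hcz : c ∈ Subgroup.zpowers g) (hc2 : c * c = 1)
    (hc1 : c ≠ 1) : ∃ m : ℕ, orderOf g = 2 * m ∧ c = g ^ (m : ℤ) ∧ 0 < m := by
  obtain ⟨j, hj⟩ := Subgroup.mem_zpowers_iff.1 hcz
  have hn : 0 < orderOf g := orderOf_pos g
  have h2 : (orderOf g : ℤ) ∣ 2 * j := by
    rw [orderOf_dvd_iff_zpow_eq_one, two_mul, zpow_add, hj, hc2]
  have h3 : ¬(orderOf g : ℤ) ∣ j := by
    intro hd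
    exact hc1 (by rw [← hj, orderOf_dvd_iff_zpow_eq_one.mp hd])
  obtain ⟨k, hk⟩ := h2
  rcases Int.even_or_odd k with ⟨k', rfl⟩ | ⟨k', rfl⟩
  · refine absurd ⟨k', by linarith [hk]⟩ h3
  · obtain ⟨M, hMdef⟩ : ∃ M : ℤ, M = j - (orderOf g : ℤ) * k' := ⟨_, rfl⟩
    have hM : (orderOf g : ℤ) = 2 * M := by rw [hMdef]; linear_combination -hk
    have hMpos : 0 < M := by omega
    refine ⟨M.toNat, by omega, ?_, by omega⟩
    rw [← hj]
    refine (zpow_eq_of_dvd ⟨-k', ?_⟩).symm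
    rw [Int.toNat_of_nonneg hMpos.le, hMdef]; ring

lemma card_le_of_mul_closed [Fintype G] (H : Subgroup G)
    (h : ∀ x y : G, x ∉ H → y ∉ H → x * y ∈ H) : Nat.card G ≤ 2 * Nat.card H := by
  classical
  have hHcard : (↑H : Set G).ncard = Nat.card H := by rw [← Nat.card_coe_set_eq]; rfl
  by_cases hex : ∃ x : G, x ∉ H
  · obtain ⟨x, hx⟩ := hex
    have hxi : x⁻¹ ∉ H := fun hh => hx (by simpa using H.inv_mem hh)
    have hsub : (Set.univ : Set G) ⊆ ↑H ∪ (fun z => x * z) '' ↑H := by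
      intro y _
      by_cases hy : y ∈ H
      · exact Or.inl hy
      · right
        exact ⟨x⁻¹ * y, h x⁻¹ y hxi hy, by group⟩
    have h1 : Nat.card G = (Set.univ : Set G).ncard := (Set.ncard_univ G).symm
    have h2 : (Set.univ : Set G).ncard ≤ (↑H ∪ (fun z => x * z) '' ↑H : Set G).ncard :=
      Set.ncard_le_ncard hsub (Set.toFinite _)
    have h3 := Set.ncard_union_le (↑H : Set G) ((fun z => x * z) '' ↑H)
    have h4 := Set.ncard_image_le (s := (↑H : Set G)) (f := fun z => x * z) (Set.toFinite _)
    omega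
  · push_neg at hex
    have hsub : (Set.univ : Set G) ⊆ (↑H : Set G) := fun y _ => hex y
    have h1 : Nat.card G = (Set.univ : Set G).ncard := (Set.ncard_univ G).symm
    have h2 := Set.ncard_le_ncard hsub (Set.toFinite _)
    omega


lemma exp_of_mem {S : Set G} {g : G} (e mz : ℤ)
    (hmem : ∀ s ∈ S, s = g ^ (1:ℤ) ∨ s = g ^ e ∨ s = g ^ mz) {s : G} (hs : s ∈ S) :
    ∃ p : ℤ, (p = 1 ∨ p = e ∨ p = mz) ∧ s = g ^ p := by
  rcases hmem s hs with h | h | h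
  exacts [⟨1, Or.inl rfl, h⟩, ⟨e, Or.inr (Or.inl rfl), h⟩, ⟨mz, Or.inr (Or.inr rfl), h⟩]

lemma cover_dvd {S : Set G} {g : G} (e mz : ℤ)
    (hcov : ∀ z : G, z ∈ S ∨ z = 1 ∨ (∃ s ∈ S, ∃ t ∈ S, s * t = z) ∨
      (∃ s ∈ S, ∃ t ∈ S, z * s = t) ∨ (∃ s ∈ S, ∃ t ∈ S, s * z = t) ∨ z * z ∈ S)
    (hmem : ∀ s ∈ S, s = g ^ (1:ℤ) ∨ s = g ^ e ∨ s = g ^ mz) (i : ℤ) :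
    ∃ p q : ℤ, (p = 1 ∨ p = e ∨ p = mz) ∧ (q = 1 ∨ q = e ∨ q = mz) ∧
      ((orderOf g : ℤ) ∣ i ∨ (orderOf g : ℤ) ∣ i - p ∨ (orderOf g : ℤ) ∣ p + q - i ∨
        (orderOf g : ℤ) ∣ i + p - q ∨ (orderOf g : ℤ) ∣ p + i - q ∨
        (orderOf g : ℤ) ∣ i + i - p) := by
  have hone : (1:ℤ) = 1 ∨ (1:ℤ) = e ∨ (1:ℤ) = mz := Or.inl rfl
  rcases hcov (g ^ i) with hh | hh | ⟨s, hs, t, ht, hh⟩ | ⟨s, hs, t, ht, hh⟩ |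
    ⟨s, hs, t, ht, hh⟩ | hh
  · obtain ⟨p, hpm, hp⟩ := exp_of_mem e mz hmem hh
    exact ⟨p, 1, hpm, hone, Or.inr (Or.inl (dvd_of_zpow_eq hp))⟩
  · refine ⟨1, 1, hone, hone, Or.inl ?_⟩
    rw [orderOf_dvd_iff_zpow_eq_one]; exact hh
  · obtain ⟨p, hpm, rfl⟩ := exp_of_mem e mz hmem hs
    obtain ⟨q, hqm, rfl⟩ := exp_of_mem e mz hmem ht
    rw [← zpow_add] at hh
    exact ⟨p, q, hpm, hqm, Or.inr (Or.inr (Or.inl (dvd_of_zpow_eq hh)))⟩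
  · obtain ⟨p, hpm, rfl⟩ := exp_of_mem e mz hmem hs
    obtain ⟨q, hqm, rfl⟩ := exp_of_mem e mz hmem ht
    rw [← zpow_add] at hh
    exact ⟨p, q, hpm, hqm, Or.inr (Or.inr (Or.inr (Or.inl (dvd_of_zpow_eq hh))))⟩
  · obtain ⟨p, hpm, rfl⟩ := exp_of_mem e mz hmem hs
    obtain ⟨q, hqm, rfl⟩ := exp_of_mem e mz hmem ht
    rw [← zpow_add] at hh
    exact ⟨p, q, hpm, hqm, Or.inr (Or.inr (Or.inr (Or.inr (Or.inl (dvd_of_zpow_eq hh)))))⟩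
  · rw [← zpow_add] at hh
    obtain ⟨p, hpm, hp⟩ := exp_of_mem e mz hmem hh
    exact ⟨p, 1, hpm, hone, Or.inr (Or.inr (Or.inr (Or.inr (Or.inr (dvd_of_zpow_eq hp)))))⟩

lemma conj_exponent {S : Set G} {g : G} (e mz : ℤ)
    (hcov : ∀ z : G, z ∈ S ∨ z = 1 ∨ (∃ s ∈ S, ∃ t ∈ S, s * t = z) ∨
      (∃ s ∈ S, ∃ t ∈ S, z * s = t) ∨ (∃ s ∈ S, ∃ t ∈ S, s * z = t) ∨ z * z ∈ S)
    (hmem : ∀ s ∈ S, s = g ^ (1:ℤ) ∨ s = g ^ e ∨ s = g ^ mz)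
    {x : G} (hx : x ∉ Subgroup.zpowers g) :
    ∃ t σ1 : ℤ, x * g * x⁻¹ = g ^ t ∧ (σ1 = 1 ∨ σ1 = e ∨ σ1 = mz) ∧
      ∀ i : ℤ, ∃ σ3 : ℤ, (σ3 = 1 ∨ σ3 = e ∨ σ3 = mz) ∧
        (orderOf g : ℤ) ∣ t * i + σ1 + i - σ3 := by
  have hSH : ∀ s ∈ S, s ∈ Subgroup.zpowers g := by
    intro s hs
    rcases hmem s hs with rfl | rfl | rfl <;> exact Subgroup.mem_zpowers_iff.2 ⟨_, rfl⟩
  have hnotH : ∀ i : ℤ, x * g ^ i ∉ Subgroup.zpowers g := by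
    intro i hh
    apply hx
    have h2 := Subgroup.mul_mem _ hh (Subgroup.inv_mem _ (Subgroup.mem_zpowers_iff.2 ⟨i, rfl⟩))
    simpa [mul_assoc] using h2
  have hs1 := sq_mem _ hcov hSH hx
  obtain ⟨σ1, hσ1m, hσ1⟩ := exp_of_mem e mz hmem hs1
  have hs2 := sq_mem _ hcov hSH (hnotH 1)
  obtain ⟨σ2, hσ2m, hσ2⟩ := exp_of_mem e mz hmem hs2
  rw [zpow_one] at hs2 hσ2
  have hconj : x * g * x⁻¹ = g ^ (σ2 - 1 - σ1) := by
    have hid : x * g * x⁻¹ = ((x * g) * (x * g)) * g⁻¹ * (x * x)⁻¹ := by group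
    rw [hσ2, hσ1] at hid
    rw [hid, ← zpow_neg_one, ← zpow_neg, ← zpow_add, ← zpow_add]
    exact zpow_eq_of_dvd ⟨0, by ring⟩
  refine ⟨σ2 - 1 - σ1, σ1, hconj, hσ1m, ?_⟩
  intro i
  have hs3 := sq_mem _ hcov hSH (hnotH i)
  obtain ⟨σ3, hσ3m, hσ3⟩ := exp_of_mem e mz hmem hs3
  refine ⟨σ3, hσ3m, ?_⟩
  have hconji : x * g ^ i * x⁻¹ = (x * g * x⁻¹) ^ i := by
    simpa [MulAut.conj_apply] using (map_zpow (MulAut.conj x) g i).symm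
  have hid : (x * g ^ i) * (x * g ^ i) = (x * g ^ i * x⁻¹) * (x * x) * g ^ i := by group
  rw [hconji, hconj, ← zpow_mul, hσ1, ← zpow_add, ← zpow_add, hσ3] at hid
  have hd := dvd_of_zpow_eq hid.symm
  rwa [show (σ2 - 1 - σ1) * i + σ1 + i - σ3 = ((σ2-1-σ1) * i + σ1 + i) - σ3 by ring]

lemma index_bound [Fintype G] {g : G}
    (hinv : ∀ x : G, x ∉ Subgroup.zpowers g → x * g * x⁻¹ = g⁻¹)
    (hord2 : 2 < orderOf g) : Nat.card G ≤ 2 * orderOf g := by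
  have h := card_le_of_mul_closed (Subgroup.zpowers g) ?_
  · rwa [Nat.card_zpowers] at h
  · intro x y hx hy
    by_contra hxy
    have h1 := hinv x hx
    have h2 := hinv y hy
    have h3 := hinv (x * y) hxy
    have h4 : (x * y) * g * (x * y)⁻¹ = x * (y * g * y⁻¹) * x⁻¹ := by group
    rw [h2, h3] at h4
    have h5 : x * g⁻¹ * x⁻¹ = (x * g * x⁻¹)⁻¹ := by group
    rw [h5, h1, inv_inv] at h4
    have h6 : g ^ 2 = 1 := by
      rw [pow_two]
      have h7 : g⁻¹ * g = g * g := by rw [h4]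
      rw [inv_mul_cancel] at h7
      exact h7.symm
    have := orderOf_le_of_pow_eq_one (by omega : 0 < 2) h6
    omega


lemma shapeII [Fintype G] {S : Set G} {g : G} (m : ℕ)
    (hpf : productFree S)
    (hcov : ∀ z : G, z ∈ S ∨ z = 1 ∨ (∃ s ∈ S, ∃ t ∈ S, s * t = z) ∨
      (∃ s ∈ S, ∃ t ∈ S, z * s = t) ∨ (∃ s ∈ S, ∃ t ∈ S, s * z = t) ∨ z * z ∈ S)
    (hgS : g ∈ S) (hbS : g ^ (-2:ℤ) ∈ S) (hcS : g ^ (m:ℤ) ∈ S)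
    (hmem : ∀ s ∈ S, s = g ^ (1:ℤ) ∨ s = g ^ (-2:ℤ) ∨ s = g ^ (m:ℤ))
    (hord : orderOf g = 2 * m)
    (h2 : 2 < orderOf (g ^ (-2:ℤ))) :
    Nat.card G ≤ 24 := by
  have hno : (orderOf g : ℤ) = 2 * (m:ℤ) := by rw [hord]; push_cast; ring
  have hm0 : 0 < m := by have := orderOf_pos g; omega
  have hm3 : 3 ≤ m := by
    have hdvd : orderOf (g ^ (-2:ℤ)) ∣ m := by
      apply orderOf_dvd_of_pow_eq_one
      have he : (g ^ (-2:ℤ)) ^ (m:ℕ) = g ^ ((-2) * (m:ℤ)) := by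
        rw [← zpow_natCast (g ^ (-2:ℤ)) m, ← zpow_mul]
      rw [he]
      exact orderOf_dvd_iff_zpow_eq_one.mp ⟨-1, by rw [hno]; ring⟩
    have := Nat.le_of_dvd hm0 hdvd
    omega
  have hm345 : m = 3 ∨ m = 4 ∨ 5 ≤ m := by omega
  rcases hm345 with rfl | rfl | hm5
  · -- m = 3 : g * c = b ∈ S contradicts product-freeness
    exfalso
    apply hpf g hgS _ hcS
    have he : g * g ^ ((3:ℕ):ℤ) = g ^ (-2:ℤ) := by
      have h1 : g * g ^ ((3:ℕ):ℤ) = g ^ (1 + ((3:ℕ):ℤ)) := by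
        rw [zpow_add, zpow_one]
      rw [h1]
      exact zpow_eq_of_dvd ⟨1, by rw [hno]; omega⟩
    rw [he]; exact hbS
  · -- m = 4 : b * b = c ∈ S contradicts product-freeness
    exfalso
    apply hpf _ hbS _ hbS
    have he : g ^ (-2:ℤ) * g ^ (-2:ℤ) = g ^ (((4:ℕ)):ℤ) := by
      rw [← zpow_add]
      exact zpow_eq_of_dvd ⟨-1, by rw [hno]; omega⟩
    rw [he]; exact hcS
  · -- m ≥ 5 : coverage at exponent 4 shows m ∈ {5,6,8}
    have h568 : m = 5 ∨ m = 6 ∨ m = 8 := by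
      obtain ⟨p, q, hpm, hqm, hd⟩ := cover_dvd (-2) (m:ℤ) hcov hmem 4
      rcases hpm with rfl | rfl | rfl <;> rcases hqm with rfl | rfl | rfl <;>
        rcases hd with h | h | h | h | h | h <;>
        · rw [hno] at h
          rcases divTri2 (by omega) h with h' | h' | h' | h' | h' <;> omega
    have hm8 : m ≠ 8 := by
      intro rfl8
      subst rfl8
      obtain ⟨p, q, hpm, hqm, hd⟩ := cover_dvd (-2) ((8:ℕ):ℤ) hcov hmem 5
      have h16 : (orderOf g : ℤ) = 16 := by rw [hno]; omega
      rcases hpm with rfl | rfl | rfl <;> rcases hqm with rfl | rfl | rfl <;>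
        rcases hd with h | h | h | h | h | h <;>
        · rw [h16] at h
          omega
    have hinv : ∀ x : G, x ∉ Subgroup.zpowers g → x * g * x⁻¹ = g⁻¹ := by
      intro x hx
      obtain ⟨t, σ1, hconj, hσ1m, hi⟩ := conj_exponent (-2) (m:ℤ) hcov hmem hx
      obtain ⟨σa, hσam, hda⟩ := hi 1
      obtain ⟨σb, hσbm, hdb⟩ := hi 2
      obtain ⟨σc, hσcm, hdc⟩ := hi 4
      have hdd : (orderOf g : ℤ) ∣ t - (-1) := by
        rw [hno] at hda hdb hdc ⊢
        rcases h568 with rfl | rfl | rfl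
        · rcases hσ1m with rfl | rfl | rfl <;> rcases hσam with rfl | rfl | rfl <;>
            rcases hσbm with rfl | rfl | rfl <;> rcases hσcm with rfl | rfl | rfl <;>
            · push_cast at hda hdb hdc ⊢
              omega
        · rcases hσ1m with rfl | rfl | rfl <;> rcases hσam with rfl | rfl | rfl <;>
            rcases hσbm with rfl | rfl | rfl <;> rcases hσcm with rfl | rfl | rfl <;>
            · push_cast at hda hdb hdc ⊢
              omega
        · exact absurd rfl hm8
      rw [hconj]
      have := zpow_eq_of_dvd hdd
      rw [this, zpow_neg_one]
    have hbound := index_bound hinv (by omega)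
    rw [hord] at hbound
    rcases h568 with rfl | rfl | rfl
    · omega
    · omega
    · exact absurd rfl hm8


lemma quat_bound [Fintype G] (P : Subgroup G) {c : G} (hc1 : c ≠ 1) (hc2 : c * c = 1)
    (hsq : ∀ p ∈ P, p ≠ 1 → p ≠ c → p * p = c) : Nat.card P ≤ 8 := by
  classical
  have hPcard : Nat.card P = ((P : Set G)).ncard := by
    rw [← Nat.card_coe_set_eq]; rfl
  have hfour : ∀ w1 w2 w3 w4 : G, ({w1, w2, w3, w4} : Set G).ncard ≤ 4 := by
    intro w1 w2 w3 w4
    calc ({w1, w2, w3, w4} : Set G).ncard ≤ ({w2, w3, w4} : Set G).ncard + 1 :=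
          Set.ncard_insert_le _ _
      _ ≤ (({w3, w4} : Set G).ncard + 1) + 1 := by
          have := Set.ncard_insert_le w2 ({w3, w4} : Set G); omega
      _ ≤ ((({w4} : Set G).ncard + 1) + 1) + 1 := by
          have := Set.ncard_insert_le w3 ({w4} : Set G); omega
      _ ≤ 4 := by simp
  by_cases hex : ∃ x ∈ P, x ≠ 1 ∧ x ≠ c
  · obtain ⟨x, hxP, hx1, hxc⟩ := hex
    have hxx : x * x = c := hsq x hxP hx1 hxc
    have hxinv : x⁻¹ = x * c := by
      apply inv_eq_of_mul_eq_one_right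
      rw [← mul_assoc, hxx, hc2]
    have hcent : ∀ u ∈ P, u * x = x * u → u ∈ ({1, c, x, x * c} : Set G) := by
      intro u huP hcomm
      by_cases hu1 : u = 1
      · simp [hu1]
      by_cases huc : u = c
      · simp [huc]
      have huu : u * u = c := hsq u huP hu1 huc
      by_cases hxu1 : x * u = 1
      · have : u = x⁻¹ := (inv_eq_of_mul_eq_one_right hxu1).symm
        rw [this, hxinv]
        simp
      by_cases hxuc : x * u = c
      · have hux : u = x := by
          have h1 : u = x⁻¹ * c := by rw [← hxuc]; group
          rw [h1, hxinv, mul_assoc, hc2, mul_one]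
        simp [hux]
      exfalso
      have h1 : x * u * (x * u) = c := hsq _ (P.mul_mem hxP huP) hxu1 hxuc
      have h2 : x * u * (x * u) = x * (u * x) * u := by group
      rw [h2, hcomm] at h1
      have h3 : x * (x * u) * u = (x * x) * (u * u) := by group
      rw [h3, hxx, huu, hc2] at h1
      exact hc1 h1.symm
    have hconj : ∀ y ∈ P, y ∉ ({1, c, x, x * c} : Set G) → y⁻¹ * x * y = x⁻¹ := by
      intro y hyP hyC
      have hy1 : y ≠ 1 := fun h => hyC (by simp [h])
      have hyc : y ≠ c := fun h => hyC (by simp [h])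
      have hyy : y * y = c := hsq y hyP hy1 hyc
      have hxy1 : x * y ≠ 1 := by
        intro h
        have : y = x⁻¹ := (inv_eq_of_mul_eq_one_right h).symm
        exact hyC (by rw [this, hxinv]; simp)
      have hxyc : x * y ≠ c := by
        intro h
        have h1 : y = x⁻¹ * c := by rw [← h]; group
        have : y = x := by rw [h1, hxinv, mul_assoc, hc2, mul_one]
        exact hyC (by rw [this]; simp)
      have hxyxy : x * y * (x * y) = c := hsq _ (P.mul_mem hxP hyP) hxy1 hxyc
      have e0 : x * y * (x * y) = (x * y * x) * y := by group
      rw [e0, ← hyy] at hxyxy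
      have e1 : x * y * x = y := mul_right_cancel hxyxy
      have e2 : (y⁻¹ * x * y) * x = 1 := by
        rw [show (y⁻¹ * x * y) * x = y⁻¹ * (x * y * x) by group, e1]
        group
      exact eq_inv_of_mul_eq_one_left e2
    by_cases hey : ∃ y ∈ P, y ∉ ({1, c, x, x * c} : Set G)
    · obtain ⟨y0, hy0P, hy0C⟩ := hey
      have hy3 : y0⁻¹ * x⁻¹ * y0 = x := by
        have h := hconj y0 hy0P hy0C
        calc y0⁻¹ * x⁻¹ * y0 = (y0⁻¹ * x * y0)⁻¹ := by group
          _ = x := by rw [h]; group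
      have hsub : (P : Set G) ⊆ ({1, c, x, x * c} : Set G) ∪
          (fun z => y0 * z) '' ({1, c, x, x * c} : Set G) := by
        intro z hzP
        by_cases hzC : z ∈ ({1, c, x, x * c} : Set G)
        · exact Or.inl hzC
        right
        refine ⟨y0⁻¹ * z, ?_, by group⟩
        have hzz := hconj z hzP hzC
        have hz3 : z * x * z⁻¹ = x⁻¹ := by
          have h1 : z⁻¹ * x⁻¹ * z = x := by
            rw [show z⁻¹ * x⁻¹ * z = (z⁻¹ * x * z)⁻¹ by group, hzz, inv_inv]
          have h2 : z * (z⁻¹ * x⁻¹ * z) * z⁻¹ = z * x * z⁻¹ :=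
            congrArg (fun w => z * w * z⁻¹) h1
          rw [← h2]; group
        have huP : y0⁻¹ * z ∈ P := P.mul_mem (P.inv_mem hy0P) hzP
        apply hcent _ huP
        have h2 : (y0⁻¹ * z) * x * (y0⁻¹ * z)⁻¹ = y0⁻¹ * (z * x * z⁻¹) * y0 := by group
        rw [hz3, hy3] at h2
        have h3 := congrArg (fun w => w * (y0⁻¹ * z)) h2
        simpa [mul_assoc] using h3
      calc Nat.card P = ((P : Set G)).ncard := hPcard
        _ ≤ (({1, c, x, x * c} : Set G) ∪
            (fun z => y0 * z) '' ({1, c, x, x * c} : Set G)).ncard :=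
          Set.ncard_le_ncard hsub (Set.toFinite _)
        _ ≤ ({1, c, x, x * c} : Set G).ncard +
            ((fun z => y0 * z) '' ({1, c, x, x * c} : Set G)).ncard := Set.ncard_union_le _ _
        _ ≤ 8 := by
          have h1 := hfour 1 c x (x * c)
          have h2 := Set.ncard_image_le (s := ({1, c, x, x * c} : Set G))
            (f := fun z => y0 * z) (Set.toFinite _)
          omega
    · push_neg at hey
      have hsub : (P : Set G) ⊆ ({1, c, x, x * c} : Set G) := fun z hz => hey z hz
      have := Set.ncard_le_ncard hsub (Set.toFinite _)
      have := hfour 1 c x (x * c)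
      omega
  · push_neg at hex
    have hsub : (P : Set G) ⊆ ({1, c} : Set G) := by
      intro z hz
      rcases eq_or_ne z 1 with rfl | h1
      · simp
      rcases eq_or_ne z c with rfl | h2
      · simp
      exact absurd (hex z hz h1) h2
    have h2 := Set.ncard_le_ncard hsub (Set.toFinite _)
    have h3 : ({1, c} : Set G).ncard ≤ 2 := by
      have := Set.ncard_insert_le (1:G) ({c} : Set G); simp at this ⊢; omega
    omega


lemma shapeI [Fintype G] {S : Set G} {g : G} (m : ℕ)
    (hpf : productFree S)
    (hcov : ∀ z : G, z ∈ S ∨ z = 1 ∨ (∃ s ∈ S, ∃ t ∈ S, s * t = z) ∨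
      (∃ s ∈ S, ∃ t ∈ S, z * s = t) ∨ (∃ s ∈ S, ∃ t ∈ S, s * z = t) ∨ z * z ∈ S)
    (hgS : g ∈ S) (hbS : g ^ (-1:ℤ) ∈ S) (hcS : g ^ (m:ℤ) ∈ S)
    (hmem : ∀ s ∈ S, s = g ^ (1:ℤ) ∨ s = g ^ (-1:ℤ) ∨ s = g ^ (m:ℤ))
    (hord : orderOf g = 2 * m) (h4 : 4 ≤ orderOf g) :
    Nat.card G ≤ 24 := by
  have hno : (orderOf g : ℤ) = 2 * (m:ℤ) := by rw [hord]; push_cast; ring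
  have hm2 : 2 ≤ m := by omega
  have hm2345 : m = 2 ∨ m = 3 ∨ m = 4 ∨ 5 ≤ m := by omega
  rcases hm2345 with rfl | rfl | rfl | hm5
  · -- m = 2 : g * g = c ∈ S contradicts product-freeness
    exfalso
    apply hpf g hgS g hgS
    have he : g * g = g ^ (((2:ℕ)):ℤ) := by
      rw [show g * g = g ^ (1:ℤ) * g ^ (1:ℤ) by simp, ← zpow_add]
      exact zpow_eq_of_dvd ⟨0, by omega⟩
    rw [he]; exact hcS
  · -- m = 3 : Sylow-type argument
    have hsix : (orderOf g : ℤ) = 6 := by rw [hno]; omega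
    have hsixN : orderOf g = 6 := by omega
    have hSH : ∀ s ∈ S, s ∈ Subgroup.zpowers g := by
      intro s hs
      rcases hmem s hs with rfl | rfl | rfl <;> exact Subgroup.mem_zpowers_iff.2 ⟨_, rfl⟩
    have hcE2 : g ^ ((3:ℕ):ℤ) * g ^ ((3:ℕ):ℤ) = 1 := by
      rw [← zpow_add]
      exact orderOf_dvd_iff_zpow_eq_one.mp ⟨1, by rw [hsix]; omega⟩
    have hcE1 : g ^ ((3:ℕ):ℤ) ≠ 1 := by
      intro hh
      have h6d := orderOf_dvd_iff_zpow_eq_one.mpr hh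
      rw [hsix] at h6d
      omega
    have hNnorm : (Subgroup.zpowers g).Normal := by
      constructor
      intro nn hnn x
      by_cases hx : x ∈ Subgroup.zpowers g
      · exact Subgroup.mul_mem _ (Subgroup.mul_mem _ hx hnn) (Subgroup.inv_mem _ hx)
      · have hs1 := sq_mem (Subgroup.zpowers g) hcov hSH hx
        have hxh : x * nn ∉ Subgroup.zpowers g := by
          intro hh
          exact hx (by simpa [mul_assoc] using
            Subgroup.mul_mem _ hh (Subgroup.inv_mem _ hnn))
        have hs2 := sq_mem (Subgroup.zpowers g) hcov hSH hxh
        have hid : x * nn * x⁻¹ = ((x * nn) * (x * nn)) * nn⁻¹ * (x * x)⁻¹ := by group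
        rw [hid]
        exact Subgroup.mul_mem _ (Subgroup.mul_mem _ (hSH _ hs2) (Subgroup.inv_mem _ hnn))
          (Subgroup.inv_mem _ (hSH _ hs1))
    haveI := hNnorm
    have hsq1 : ∀ x : G, x * x ∈ Subgroup.zpowers g := by
      intro x
      by_cases hx : x ∈ Subgroup.zpowers g
      · exact Subgroup.mul_mem _ hx hx
      · exact hSH _ (sq_mem (Subgroup.zpowers g) hcov hSH hx)
    have hsqQ : ∀ q : G ⧸ Subgroup.zpowers g, q * q = 1 := by
      intro q
      refine QuotientGroup.induction_on q ?_
      intro z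
      rw [← QuotientGroup.mk_mul]
      exact (QuotientGroup.eq_one_iff _).mpr (hsq1 z)
    have hP2 : IsPGroup 2 (G ⧸ Subgroup.zpowers g) := by
      intro q
      exact ⟨1, by rw [show (2:ℕ)^1 = 2 by norm_num, pow_two]; exact hsqQ q⟩
    haveI : Fact (Nat.Prime 2) := ⟨Nat.prime_two⟩
    obtain ⟨k, hk⟩ := IsPGroup.iff_card.mp hP2
    have hGcard : Nat.card G = Nat.card (G ⧸ Subgroup.zpowers g) * Nat.card (Subgroup.zpowers g) :=
      Subgroup.card_eq_card_quotient_mul_card_subgroup _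
    have hNcard : Nat.card (Subgroup.zpowers g) = 6 := by rw [Nat.card_zpowers, hsixN]
    obtain ⟨P⟩ : Nonempty (Sylow 2 G) := Sylow.nonempty
    have hPcard : Nat.card (P : Subgroup G) = 2 ^ (Nat.card G).factorization 2 :=
      P.card_eq_multiplicity
    have hGval : Nat.card G = 3 * 2 ^ (k + 1) := by rw [hGcard, hk, hNcard]; ring
    have hfact : (Nat.card G).factorization 2 = k + 1 := by
      rw [hGval, Nat.factorization_mul (by norm_num) (by positivity)]
      rw [Nat.Prime.factorization_pow Nat.prime_two]
      simp [Nat.factorization_eq_zero_of_not_dvd (by norm_num : ¬ (2:ℕ) ∣ 3)]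
    have hP3 : Nat.card G = 3 * Nat.card (P : Subgroup G) := by rw [hPcard, hfact, hGval]
    have hPsq : ∀ p ∈ (P : Subgroup G), p ≠ 1 → p ≠ g ^ ((3:ℕ):ℤ) → p * p = g ^ ((3:ℕ):ℤ) := by
      intro p hp h1 hcE
      obtain ⟨l, hl⟩ := P.isPGroup' ⟨p, hp⟩
      have hpl : p ^ (2 ^ l) = 1 := by
        have h2 := congrArg (fun z : (P : Subgroup G) => (z : G)) hl
        simpa using h2
      have hdl : orderOf p ∣ 2 ^ l := orderOf_dvd_of_pow_eq_one hpl
      by_cases hpN : p ∈ Subgroup.zpowers g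
      · exfalso
        obtain ⟨j, hj⟩ := Subgroup.mem_zpowers_iff.1 hpN
        have hp6 : p ^ (6:ℕ) = 1 := by
          rw [← hj, ← zpow_natCast (g ^ j) 6, ← zpow_mul]
          exact orderOf_dvd_iff_zpow_eq_one.mp ⟨j, by rw [hsix]; push_cast; ring⟩
        have hd6 : orderOf p ∣ 6 := orderOf_dvd_of_pow_eq_one hp6
        have h3nd : ¬ 3 ∣ orderOf p := by
          intro h3d
          have h32 := Nat.Prime.dvd_of_dvd_pow Nat.prime_three (h3d.trans hdl)
          omega
        have hcop : Nat.Coprime (orderOf p) 3 :=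
          Nat.coprime_comm.mp ((Nat.Prime.coprime_iff_not_dvd Nat.prime_three).mpr h3nd)
        have hd2 : orderOf p ∣ 2 := hcop.dvd_of_dvd_mul_right
          (by rw [show 2 * 3 = 6 by norm_num]; exact hd6)
        have hpp : p * p = 1 := by
          rw [← pow_two]
          exact orderOf_dvd_iff_pow_eq_one.mp hd2
        have hd2j : (orderOf g : ℤ) ∣ j + j :=
          orderOf_dvd_iff_zpow_eq_one.mpr (by rw [zpow_add, hj]; exact hpp)
        rw [hsix] at hd2j
        obtain ⟨w, hw⟩ := hd2j
        have hjw : j = 3 * w := by omega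
        have hpw : p = (g ^ ((3:ℕ):ℤ)) ^ w := by
          rw [← hj, ← zpow_mul]
          congr 1 <;> omega
        rcases Int.even_or_odd w with ⟨w', rfl⟩ | ⟨w', rfl⟩
        · exact h1 (by
            rw [hpw, show w' + w' = 2 * w' by ring, zpow_mul, zpow_two, hcE2, one_zpow])
        · exact hcE (by
            rw [hpw, zpow_add, zpow_one, zpow_mul, zpow_two, hcE2, one_zpow, one_mul])
      · have hsqS := sq_mem (Subgroup.zpowers g) hcov hSH hpN
        have hordp2 : orderOf (p * p) ∣ 2 ^ l :=
          dvd_trans (by rw [← pow_two]; exact orderOf_pow_dvd 2) hdl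
        rcases hmem _ hsqS with he | he | he
        · exfalso
          rw [he, zpow_one, hsixN] at hordp2
          have := Nat.Prime.dvd_of_dvd_pow Nat.prime_three
            (dvd_trans (by norm_num) hordp2)
          omega
        · exfalso
          rw [he, zpow_neg_one, orderOf_inv, hsixN] at hordp2
          have := Nat.Prime.dvd_of_dvd_pow Nat.prime_three
            (dvd_trans (by norm_num) hordp2)
          omega
        · exact he
    have hqb := quat_bound (P : Subgroup G) hcE1 hcE2 hPsq
    omega
  · -- m = 4 : conjugation/index argument
    have hinv : ∀ x : G, x ∉ Subgroup.zpowers g → x * g * x⁻¹ = g⁻¹ := by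
      intro x hx
      obtain ⟨t, σ1, hconj, hσ1m, hi⟩ := conj_exponent (-1) (((4:ℕ)):ℤ) hcov hmem hx
      obtain ⟨σa, hσam, hda⟩ := hi 1
      obtain ⟨σb, hσbm, hdb⟩ := hi 2
      obtain ⟨σc, hσcm, hdc⟩ := hi 4
      have h8 : (orderOf g : ℤ) = 8 := by rw [hno]; omega
      have hdd : (orderOf g : ℤ) ∣ t - (-1) := by
        rw [h8] at hda hdb hdc ⊢
        rcases hσ1m with rfl | rfl | rfl <;> rcases hσam with rfl | rfl | rfl <;>
          rcases hσbm with rfl | rfl | rfl <;> rcases hσcm with rfl | rfl | rfl <;>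
          · push_cast at hda hdb hdc ⊢
            omega
      rw [hconj, zpow_eq_of_dvd hdd, zpow_neg_one]
    have hbound := index_bound hinv (by omega)
    rw [hord] at hbound
    omega
  · -- m ≥ 5 : coverage kills everything except m = 6, then m = 6 dies too
    exfalso
    have hm6 : m = 6 := by
      obtain ⟨p, q, hpm, hqm, hd⟩ := cover_dvd (-1) (m:ℤ) hcov hmem 3
      rcases hpm with rfl | rfl | rfl <;> rcases hqm with rfl | rfl | rfl <;>
        rcases hd with h | h | h | h | h | h <;>
        · rw [hno] at h
          rcases divTri2 (by omega) h with h' | h' | h' | h' | h' <;> omega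
    subst hm6
    obtain ⟨p, q, hpm, hqm, hd⟩ := cover_dvd (-1) (((6:ℕ)):ℤ) hcov hmem 4
    have h12 : (orderOf g : ℤ) = 12 := by rw [hno]; omega
    rcases hpm with rfl | rfl | rfl <;> rcases hqm with rfl | rfl | rfl <;>
      rcases hd with h | h | h | h | h | h <;>
      · rw [h12] at h
        omega


lemma engine [Fintype G] {S : Set G} {a b c : G} (hS : S = {a, b, c}) (hcard : S.ncard = 3)
    (h : locallyMaximalPF S) (hc2 : c * c = 1) (hc1 : c ≠ 1)
    (ha : 2 < orderOf a) (hb : 2 < orderOf b)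
    (hgen : ∀ x ∈ S, ∀ y ∈ S, x ≠ y → Subgroup.closure {x, y} = Subgroup.closure S)
    (ha4 : 4 ≤ orderOf a) : Nat.card G ≤ 24 := by
  have haS : a ∈ S := by rw [hS]; simp
  have hbS : b ∈ S := by rw [hS]; simp
  have hcS : c ∈ S := by rw [hS]; simp
  have hpair : ∀ x y : G, ({x, y} : Set G).ncard ≤ 2 := by
    intro x y
    have h1 := Set.ncard_insert_le x ({y} : Set G)
    simp at h1
    omega
  have hab : a ≠ b := by
    rintro rfl
    rw [hS, show ({a, a, c} : Set G) = {a, c} by ext z; simp] at hcard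
    have := hpair a c
    omega
  have hac : a ≠ c := by
    rintro rfl
    rw [hS, show ({a, b, a} : Set G) = {a, b} by ext z; simp; tauto] at hcard
    have := hpair a b
    omega
  have hbc : b ≠ c := by
    rintro rfl
    rw [hS, show ({a, b, b} : Set G) = {a, b} by ext z; simp] at hcard
    have := hpair a b
    omega
  have hpf := h.1
  have h1S : (1 : G) ∉ S := one_not_mem hpf hcS hc2
  have hcov := covering h h1S
  have hcinv : c⁻¹ = c := inv_eq_of_mul_eq_one_left hc2
  have ha1 : a ≠ 1 := by
    rintro rfl
    simp at ha
  have haa1 : a * a ≠ 1 := by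
    intro e
    have hd : orderOf a ∣ 2 := orderOf_dvd_of_pow_eq_one (by rw [pow_two]; exact e)
    have := Nat.le_of_dvd (by norm_num) hd
    omega
  have ha3 : a * a * a ≠ 1 := by
    intro e
    have hd : orderOf a ∣ 3 := orderOf_dvd_of_pow_eq_one
      (by rw [pow_succ, pow_two]; exact e)
    have := Nat.le_of_dvd (by norm_num) hd
    omega
  have hworlds : b = a⁻¹ ∨ b = a⁻¹ * a⁻¹ ∨ a = (b * b)⁻¹ := by
    rcases hcov a⁻¹ with hA | hA | ⟨s, hs, t, ht, e⟩ | ⟨s, hs, t, ht, e⟩ |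
      ⟨s, hs, t, ht, e⟩ | hA
    · have hA3 : a⁻¹ = a ∨ a⁻¹ = b ∨ a⁻¹ = c := by
        rw [hS] at hA
        simpa using hA
      rcases hA3 with e | e | e
      · exact absurd (mul_eq_one_iff_eq_inv.mpr e.symm) haa1
      · exact Or.inl e.symm
      · exact absurd (by rw [← hcinv, ← e, inv_inv]) hac
    · exact absurd (inv_eq_one.mp hA) ha1
    · have hs3 : s = a ∨ s = b ∨ s = c := by rw [hS] at hs; simpa using hs
      have ht3 : t = a ∨ t = b ∨ t = c := by rw [hS] at ht; simpa using ht
      rcases hs3 with hse | hse | hse <;> rw [hse] at e <;> clear hse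
      · rcases ht3 with hte | hte | hte <;> rw [hte] at e <;> clear hte
        · exact absurd (by rw [e]; group : a * a * a = 1) ha3
        · right; left
          have h' : a⁻¹ * (a * b) = a⁻¹ * a⁻¹ := by rw [e]
          simpa using h'
        · exfalso
          have h' : a⁻¹ * (a * c) = a⁻¹ * a⁻¹ := by rw [e]
          simp only [inv_mul_cancel_left] at h'
          have h2 : a * a = c⁻¹ := by rw [h', mul_inv_rev, inv_inv]
          rw [hcinv] at h2
          exact hpf a haS a haS (by rw [h2]; exact hcS)
      · rcases ht3 with hte | hte | hte <;> rw [hte] at e <;> clear hte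
        · right; left
          have h' : (b * a) * a⁻¹ = a⁻¹ * a⁻¹ := by rw [e]
          simpa [mul_assoc] using h'
        · right; right
          rw [e, inv_inv]
        · exfalso
          have h1 : a = (b * c)⁻¹ := by rw [e, inv_inv]
          have h2 : a * b = c⁻¹ := by rw [h1]; group
          rw [hcinv] at h2
          exact hpf a haS b hbS (by rw [h2]; exact hcS)
      · rcases ht3 with hte | hte | hte <;> rw [hte] at e <;> clear hte
        · exfalso
          have h' : (c * a) * a⁻¹ = a⁻¹ * a⁻¹ := by rw [e]
          simp only [mul_inv_cancel_right] at h'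
          have h2 : a * a = c⁻¹ := by rw [h', mul_inv_rev, inv_inv]
          rw [hcinv] at h2
          exact hpf a haS a haS (by rw [h2]; exact hcS)
        · exfalso
          have h1 : a = (c * b)⁻¹ := by rw [e, inv_inv]
          have h2 : b * a = c⁻¹ := by rw [h1]; group
          rw [hcinv] at h2
          exact hpf b hbS a haS (by rw [h2]; exact hcS)
        · exfalso
          rw [hc2] at e
          exact ha1 (inv_eq_one.mp e.symm)
    · exfalso
      have hs3 : s = a ∨ s = b ∨ s = c := by rw [hS] at hs; simpa using hs
      have ht3 : t = a ∨ t = b ∨ t = c := by rw [hS] at ht; simpa using ht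
      rcases hs3 with hse | hse | hse <;> rw [hse] at e <;> clear hse
      · have h1 : t = 1 := by rw [← e]; group
        exact h1S (h1 ▸ ht)
      · rcases ht3 with hte | hte | hte <;> rw [hte] at e <;> clear hte
        · have h' : a * (a⁻¹ * b) = a * a := by rw [e]
          simp only [mul_inv_cancel_left] at h'
          exact hpf a haS a haS (by rw [← h']; exact hbS)
        · exact ha1 (inv_eq_one.mp (mul_eq_right.mp e))
        · have h' : a * (a⁻¹ * b) = a * c := by rw [e]
          simp only [mul_inv_cancel_left] at h'
          exact hpf a haS c hcS (by rw [← h']; exact hbS)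
      · rcases ht3 with hte | hte | hte <;> rw [hte] at e <;> clear hte
        · have h' : a * (a⁻¹ * c) = a * a := by rw [e]
          simp only [mul_inv_cancel_left] at h'
          exact hpf a haS a haS (by rw [← h']; exact hcS)
        · have h' : a * (a⁻¹ * c) = a * b := by rw [e]
          simp only [mul_inv_cancel_left] at h'
          exact hpf a haS b hbS (by rw [← h']; exact hcS)
        · exact ha1 (inv_eq_one.mp (mul_eq_right.mp e))
    · exfalso
      have hs3 : s = a ∨ s = b ∨ s = c := by rw [hS] at hs; simpa using hs
      have ht3 : t = a ∨ t = b ∨ t = c := by rw [hS] at ht; simpa using ht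
      rcases hs3 with hse | hse | hse <;> rw [hse] at e <;> clear hse
      · have h1 : t = 1 := by rw [← e]; group
        exact h1S (h1 ▸ ht)
      · rcases ht3 with hte | hte | hte <;> rw [hte] at e <;> clear hte
        · have h' : (b * a⁻¹) * a = a * a := by rw [e]
          simp only [inv_mul_cancel_right] at h'
          exact hpf a haS a haS (by rw [← h']; exact hbS)
        · exact ha1 (inv_eq_one.mp (mul_eq_left.mp e))
        · have h' : (b * a⁻¹) * a = c * a := by rw [e]
          simp only [inv_mul_cancel_right] at h'
          exact hpf c hcS a haS (by rw [← h']; exact hbS)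
      · rcases ht3 with hte | hte | hte <;> rw [hte] at e <;> clear hte
        · have h' : (c * a⁻¹) * a = a * a := by rw [e]
          simp only [inv_mul_cancel_right] at h'
          exact hpf a haS a haS (by rw [← h']; exact hcS)
        · have h' : (c * a⁻¹) * a = b * a := by rw [e]
          simp only [inv_mul_cancel_right] at h'
          exact hpf b hbS a haS (by rw [← h']; exact hcS)
        · exact ha1 (inv_eq_one.mp (mul_eq_left.mp e))
    · have hA3 : a⁻¹ * a⁻¹ = a ∨ a⁻¹ * a⁻¹ = b ∨ a⁻¹ * a⁻¹ = c := by
        rw [hS] at hA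
        simpa using hA
      rcases hA3 with e | e | e
      · exfalso
        have h1 : (a⁻¹ * a⁻¹)⁻¹ = a⁻¹ := congrArg (fun z => z⁻¹) e
        have h1' : a * a = a⁻¹ := by rw [← h1, mul_inv_rev, inv_inv]
        have h2 : a * a * a = 1 := by rw [h1', inv_mul_cancel]
        exact ha3 h2
      · exact Or.inr (Or.inl e.symm)
      · exfalso
        have h2 : a * a = c⁻¹ := by rw [← e, mul_inv_rev, inv_inv]
        rw [hcinv] at h2
        exact hpf a haS a haS (by rw [h2]; exact hcS)
  -- now handle the three worlds
  rcases hworlds with hw | hw | hw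
  · -- b = a⁻¹ : shape I with g = a
    have hcz : c ∈ Subgroup.zpowers a := by
      have h1 : c ∈ Subgroup.closure S := Subgroup.subset_closure hcS
      rw [← hgen a haS b hbS hab] at h1
      have h2 : Subgroup.closure ({a, b} : Set G) ≤ Subgroup.zpowers a := by
        rw [Subgroup.closure_le]
        intro x hx
        simp only [Set.mem_insert_iff, Set.mem_singleton_iff] at hx
        rcases hx with hxa | hxb
        · rw [hxa]; exact Subgroup.mem_zpowers a
        · rw [hxb, hw]
          exact Subgroup.inv_mem _ (Subgroup.mem_zpowers a)
      exact h2 h1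
    obtain ⟨m, hordm, hcm, hm0⟩ := half_exists hcz hc2 hc1
    have hmem : ∀ s ∈ S, s = a ^ (1:ℤ) ∨ s = a ^ (-1:ℤ) ∨ s = a ^ (m:ℤ) := by
      intro s hsS
      have : s = a ∨ s = b ∨ s = c := by rw [hS] at hsS; simpa using hsS
      rcases this with rfl | rfl | rfl
      · left; rw [zpow_one]
      · right; left; rw [zpow_neg_one]; exact hw
      · right; right; exact hcm
    have hbS' : a ^ (-1:ℤ) ∈ S := by rw [zpow_neg_one, ← hw]; exact hbS
    have hcS' : a ^ (m:ℤ) ∈ S := by rw [← hcm]; exact hcS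
    exact shapeI m hpf hcov haS hbS' hcS' hmem hordm ha4
  · -- b = a⁻² : shape II with g = a
    have hb2 : b = a ^ (-2:ℤ) := by
      rw [hw, show (-2:ℤ) = -1 + -1 by ring, zpow_add, zpow_neg_one]
    have hcz : c ∈ Subgroup.zpowers a := by
      have h1 : c ∈ Subgroup.closure S := Subgroup.subset_closure hcS
      rw [← hgen a haS b hbS hab] at h1
      have h2 : Subgroup.closure ({a, b} : Set G) ≤ Subgroup.zpowers a := by
        rw [Subgroup.closure_le]
        intro x hx
        simp only [Set.mem_insert_iff, Set.mem_singleton_iff] at hx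
        rcases hx with hxa | hxb
        · rw [hxa]; exact Subgroup.mem_zpowers a
        · rw [hxb, hb2]
          exact Subgroup.zpow_mem _ (Subgroup.mem_zpowers a) _
      exact h2 h1
    obtain ⟨m, hordm, hcm, hm0⟩ := half_exists hcz hc2 hc1
    have hmem : ∀ s ∈ S, s = a ^ (1:ℤ) ∨ s = a ^ (-2:ℤ) ∨ s = a ^ (m:ℤ) := by
      intro s hsS
      have : s = a ∨ s = b ∨ s = c := by rw [hS] at hsS; simpa using hsS
      rcases this with rfl | rfl | rfl
      · left; rw [zpow_one]
      · right; left; exact hb2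
      · right; right; exact hcm
    have hbS' : a ^ (-2:ℤ) ∈ S := by rw [← hb2]; exact hbS
    have hcS' : a ^ (m:ℤ) ∈ S := by rw [← hcm]; exact hcS
    have h2ord : 2 < orderOf (a ^ (-2:ℤ)) := by rw [← hb2]; exact hb
    exact shapeII m hpf hcov haS hbS' hcS' hmem hordm h2ord
  · -- a = b⁻² : shape II with g = b
    have ha2 : a = b ^ (-2:ℤ) := by
      rw [hw, show (-2:ℤ) = -1 + -1 by ring, zpow_add, zpow_neg_one]
      group
    have hcz : c ∈ Subgroup.zpowers b := by
      have h1 : c ∈ Subgroup.closure S := Subgroup.subset_closure hcS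
      rw [← hgen a haS b hbS hab] at h1
      have h2 : Subgroup.closure ({a, b} : Set G) ≤ Subgroup.zpowers b := by
        rw [Subgroup.closure_le]
        intro x hx
        simp only [Set.mem_insert_iff, Set.mem_singleton_iff] at hx
        rcases hx with hxa | hxb
        · rw [hxa, ha2]
          exact Subgroup.zpow_mem _ (Subgroup.mem_zpowers b) _
        · rw [hxb]
          exact Subgroup.mem_zpowers b
      exact h2 h1
    obtain ⟨m, hordm, hcm, hm0⟩ := half_exists hcz hc2 hc1
    have hmem : ∀ s ∈ S, s = b ^ (1:ℤ) ∨ s = b ^ (-2:ℤ) ∨ s = b ^ (m:ℤ) := by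
      intro s hsS
      have : s = a ∨ s = b ∨ s = c := by rw [hS] at hsS; simpa using hsS
      rcases this with rfl | rfl | rfl
      · right; left; exact ha2
      · left; rw [zpow_one]
      · right; right; exact hcm
    have haS' : b ^ (-2:ℤ) ∈ S := by rw [← ha2]; exact haS
    have hcS' : b ^ (m:ℤ) ∈ S := by rw [← hcm]; exact hcS
    have h2ord : 2 < orderOf (b ^ (-2:ℤ)) := by rw [← ha2]; exact ha
    exact shapeII m hpf hcov hbS haS' hcS' hmem hordm h2ord

end AH

theorem stmt15 {G : Type*} [Group G] [Fintype G] (a b c : G)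
    (S : Set G) (hS : S = {a, b, c}) (hcard : S.ncard = 3)
    (h : locallyMaximalPF S)
    (hc : c ^ 2 = 1) (hc1 : c ≠ 1) (ha : 2 < orderOf a) (hb : 2 < orderOf b)
    (hgen : ∀ x ∈ S, ∀ y ∈ S, x ≠ y → Subgroup.closure {x, y} = Subgroup.closure S) :
    Nat.card G ≤ 24 ∨ (orderOf a = 3 ∧ orderOf b = 3) := by
  by_cases h3 : orderOf a = 3 ∧ orderOf b = 3
  · exact Or.inr h3
  · left
    have hc2 : c * c = 1 := by rw [← pow_two]; exact hc
    rcases not_and_or.mp h3 with h4 | h4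
    · exact AH.engine hS hcard h hc2 hc1 ha hb hgen (by omega)
    · have hS' : S = {b, a, c} := by rw [hS]; ext z; simp; tauto
      exact AH.engine hS' hcard h hc2 hc1 hb ha hgen (by omega)
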